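/- Let C, ḡ_Na, ḡ_K, ḡ_L > 0 and I, E_Na, E_K, E_L ∈ ℝ, and let b : ℝ⁴ → ℝ⁴ be the Hodgkin–Huxley vector field b(p₁,p₂,p₃,v) = (α_m(v)(1−p₁) − β_m(v)p₁, α_h(v)(1−p₂) − β_h(v)p₂, α_n(v)(1−p₃) − β_n(v)p₃, C⁻¹(I − ḡ_Na·p₁³p₂(v − E_Na) − ḡ_K·p₃⁴(v − E_K) − ḡ_L·(v − E_L))). Then for every T > 0 and every initial condition X₀ ∈ K := [0,1]³ × ℝ, the equation Ẋ(t) = b(X(t)), X(0) = X₀ has a unique solution X on [0,T], and X(t) ∈ K for every t ∈ [0,T]; in particular the gating components m(t), h(t), n(t) remain in [0,1] for all t. -/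

import Mathlib

/-- Opening rate of `n` (removable singularity at `v = 10` filled by `0.1`). -/
noncomputable def alphaN (v : ℝ) : ℝ :=
  if v = 10 then 0.1 else 0.01 * (10 - v) / (Real.exp ((10 - v) / 10) - 1)

/-- Closing rate of `n`. -/
noncomputable def betaN (v : ℝ) : ℝ := 0.125 * Real.exp (-v / 80)

/-- Opening rate of `m` (removable singularity at `v = 25` filled by `1`). -/
noncomputable def alphaM (v : ℝ) : ℝ :=
  if v = 25 then 1 else 0.1 * (25 - v) / (Real.exp ((25 - v) / 10) - 1)

/-- Closing rate of `m`. -/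
noncomputable def betaM (v : ℝ) : ℝ := 4 * Real.exp (-v / 18)

/-- Opening rate of `h`. -/
noncomputable def alphaH (v : ℝ) : ℝ := 0.07 * Real.exp (-v / 20)

/-- Closing rate of `h`. -/
noncomputable def betaH (v : ℝ) : ℝ := 1 / (Real.exp ((30 - v) / 10) + 1)

/-- The Hodgkin–Huxley vector field on `ℝ⁴`, state `(p₁, p₂, p₃, v) = (m, h, n, V)`. -/
noncomputable def hhField (C gNa gK gL I ENa EK EL : ℝ) (x : Fin 4 → ℝ) : Fin 4 → ℝ :=
  ![alphaM (x 3) * (1 - x 0) - betaM (x 3) * x 0,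
    alphaH (x 3) * (1 - x 1) - betaH (x 3) * x 1,
    alphaN (x 3) * (1 - x 2) - betaN (x 3) * x 2,
    C⁻¹ * (I - gNa * (x 0) ^ 3 * x 1 * (x 3 - ENa)
             - gK * (x 2) ^ 4 * (x 3 - EK) - gL * (x 3 - EL))]


open Real Set
open Real Set

noncomputable def eSlope : ℝ → ℝ := dslope Real.exp 0

lemma eSlope_zero : eSlope 0 = 1 := by simp [eSlope, Real.deriv_exp]

lemma eSlope_eq {x : ℝ} (hx : x ≠ 0) : eSlope x = (Real.exp x - 1) / x := by
  simp [eSlope, dslope_of_ne _ hx, slope, Real.exp_zero, hx, div_eq_inv_mul]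

lemma eSlope_pos (x : ℝ) : 0 < eSlope x := by
  rcases lt_trichotomy x 0 with h | h | h
  · rw [eSlope_eq h.ne]
    exact div_pos_of_neg_of_neg (by simpa using Real.exp_lt_one_iff.mpr h) h
  · simp [h, eSlope_zero]
  · rw [eSlope_eq h.ne']
    exact div_pos (by simpa using Real.one_lt_exp_iff.mpr h) h

lemma contDiffAt_eSlope (x : ℝ) : ContDiffAt ℝ 1 eSlope x := by
  rcases eq_or_ne x 0 with rfl | hx
  · obtain ⟨p, hp⟩ := analyticAt_rexp (x := 0)
    exact hp.has_fpower_series_dslope_fslope.analyticAt.contDiffAt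
  · have h : eSlope =ᶠ[nhds x] (fun y => (Real.exp y - 1) / y) := by
      filter_upwards [isOpen_ne.mem_nhds hx] with y hy using eSlope_eq hy
    exact ContDiffAt.congr_of_eventuallyEq
      ((Real.contDiff_exp.contDiffAt.sub contDiffAt_const).div contDiffAt_id hx) h

lemma contDiff_inv_eSlope : ContDiff ℝ 1 (fun x => (eSlope x)⁻¹) :=
  contDiff_iff_contDiffAt.mpr fun x => (contDiffAt_eSlope x).inv (eSlope_pos x).ne'

lemma alphaN_eq : alphaN = fun v => 0.1 * (eSlope ((10 - v) / 10))⁻¹ := by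
  funext v
  rcases eq_or_ne v 10 with rfl | hv
  · simp [alphaN, eSlope_zero]
  · have h10 : (10 - v) / 10 ≠ 0 := by
      intro h; apply hv; linarith [(div_eq_zero_iff.mp h).resolve_right (by norm_num)]
    have hexp : Real.exp ((10 - v) / 10) - 1 ≠ 0 := by
      have := eSlope_pos ((10 - v) / 10)
      rw [eSlope_eq h10] at this
      intro h; rw [h] at this; simp at this
    rw [alphaN, if_neg hv, eSlope_eq h10]
    field_simp
    ring

lemma alphaM_eq : alphaM = fun v => (eSlope ((25 - v) / 10))⁻¹ := by
  funext v
  rcases eq_or_ne v 25 with rfl | hv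
  · simp [alphaM, eSlope_zero]
  · have h10 : (25 - v) / 10 ≠ 0 := by
      intro h; apply hv; linarith [(div_eq_zero_iff.mp h).resolve_right (by norm_num)]
    have hexp : Real.exp ((25 - v) / 10) - 1 ≠ 0 := by
      have := eSlope_pos ((25 - v) / 10)
      rw [eSlope_eq h10] at this
      intro h; rw [h] at this; simp at this
    rw [alphaM, if_neg hv, eSlope_eq h10]
    field_simp
    ring

lemma alphaN_pos (v : ℝ) : 0 < alphaN v := by
  rw [alphaN_eq]
  have := eSlope_pos ((10 - v) / 10)
  positivity

lemma alphaM_pos (v : ℝ) : 0 < alphaM v := by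
  rw [alphaM_eq]
  have := eSlope_pos ((25 - v) / 10)
  positivity

lemma contDiff_alphaN : ContDiff ℝ 1 alphaN := by
  rw [alphaN_eq]
  exact contDiff_const.mul (contDiff_inv_eSlope.comp (by fun_prop (disch := norm_num)))

lemma contDiff_alphaM : ContDiff ℝ 1 alphaM := by
  rw [alphaM_eq]
  exact contDiff_inv_eSlope.comp (by fun_prop (disch := norm_num))

lemma betaN_pos (v : ℝ) : 0 < betaN v := by unfold betaN; positivity
lemma betaM_pos (v : ℝ) : 0 < betaM v := by unfold betaM; positivity
lemma alphaH_pos (v : ℝ) : 0 < alphaH v := by unfold alphaH; positivity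
lemma betaH_pos (v : ℝ) : 0 < betaH v := by
  unfold betaH
  positivity

lemma contDiff_betaN : ContDiff ℝ 1 betaN := by
  unfold betaN; fun_prop (disch := norm_num)
lemma contDiff_betaM : ContDiff ℝ 1 betaM := by
  unfold betaM; fun_prop (disch := norm_num)
lemma contDiff_alphaH : ContDiff ℝ 1 alphaH := by
  unfold alphaH; fun_prop (disch := norm_num)
lemma contDiff_betaH : ContDiff ℝ 1 betaH := by
  unfold betaH
  apply ContDiff.div contDiff_const
  · fun_prop (disch := norm_num)
  · intro v; positivity

lemma contDiff_hhField (C gNa gK gL I ENa EK EL : ℝ) :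
    ContDiff ℝ 1 (hhField C gNa gK gL I ENa EK EL) := by
  rw [contDiff_pi]
  intro i
  have h3 : ContDiff ℝ 1 (fun x : Fin 4 → ℝ => x 3) := contDiff_apply ℝ ℝ 3
  have h0 : ContDiff ℝ 1 (fun x : Fin 4 → ℝ => x 0) := contDiff_apply ℝ ℝ 0
  have h1 : ContDiff ℝ 1 (fun x : Fin 4 → ℝ => x 1) := contDiff_apply ℝ ℝ 1
  have h2 : ContDiff ℝ 1 (fun x : Fin 4 → ℝ => x 2) := contDiff_apply ℝ ℝ 2
  fin_cases i <;>
    simp only [hhField, Matrix.cons_val_zero, Matrix.cons_val_one, Matrix.head_cons,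
      Matrix.cons_val_two, Matrix.tail_cons, Matrix.cons_val_three, Matrix.cons_val_fin_one,
      Fin.isValue]
  · exact ((contDiff_alphaM.comp h3).mul (contDiff_const.sub h0)).sub
      ((contDiff_betaM.comp h3).mul h0)
  · exact ((contDiff_alphaH.comp h3).mul (contDiff_const.sub h1)).sub
      ((contDiff_betaH.comp h3).mul h1)
  · exact ((contDiff_alphaN.comp h3).mul (contDiff_const.sub h2)).sub
      ((contDiff_betaN.comp h3).mul h2)
  · apply contDiff_const.mul
    apply ContDiff.sub
    apply ContDiff.sub
    apply ContDiff.sub contDiff_const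
    · exact ((contDiff_const.mul (h0.pow 3)).mul h1).mul (h3.sub contDiff_const)
    · exact (contDiff_const.mul (h2.pow 4)).mul (h3.sub contDiff_const)
    · exact contDiff_const.mul (h3.sub contDiff_const)

/-- A `C¹` function on a normed space is Lipschitz on every convex compact set. -/
lemma contDiff_lipschitzOnWith {E F : Type*} [NormedAddCommGroup E] [NormedSpace ℝ E]
    [NormedAddCommGroup F] [NormedSpace ℝ F] {f : E → F} (hf : ContDiff ℝ 1 f)
    {s : Set E} (hs : Convex ℝ s) (hc : IsCompact s) :
    ∃ K : NNReal, LipschitzOnWith K f s := by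
  have hcont : ContinuousOn (fun x => ‖fderiv ℝ f x‖) s :=
    ((hf.continuous_fderiv one_ne_zero).norm).continuousOn
  obtain ⟨M, hM⟩ := hc.exists_bound_of_continuousOn hcont
  refine ⟨⟨max M 0, le_max_right _ _⟩, ?_⟩
  apply Convex.lipschitzOnWith_of_nnnorm_fderiv_le (fun x _ => hf.differentiable one_ne_zero x) _ hs
  intro x hx
  have := hM x hx
  rw [Real.norm_eq_abs, abs_of_nonneg (norm_nonneg _)] at this
  exact_mod_cast le_max_of_le_left this

/-- Derivative of the squared positive part `y ↦ (max (y - c) 0)²`. -/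
lemma hasDerivAt_sqPosPart (c y : ℝ) :
    HasDerivAt (fun z => max (z - c) 0 ^ 2) (2 * max (y - c) 0) y := by
  rcases lt_trichotomy y c with h | rfl | h
  · have he : (fun z => max (z - c) 0 ^ 2) =ᶠ[nhds y] fun _ => (0:ℝ) := by
      filter_upwards [Iio_mem_nhds h] with z hz
      simp [max_eq_right (by linarith [mem_Iio.mp hz] : z - c ≤ 0)]
    have : HasDerivAt (fun _ : ℝ => (0:ℝ)) 0 y := hasDerivAt_const y 0
    simpa [max_eq_right (by linarith : y - c ≤ 0)] using this.congr_of_eventuallyEq he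
  · rw [hasDerivAt_iff_isLittleO]
    rw [Asymptotics.isLittleO_iff]
    intro ε hε
    filter_upwards [Metric.ball_mem_nhds y hε] with z hz
    have hz' : |z - y| < ε := by simpa [Real.dist_eq] using hz
    simp only [sub_self, max_eq_right le_rfl, ne_eq, OfNat.ofNat_ne_zero,
      not_false_eq_true, zero_pow, sub_zero, smul_eq_mul, mul_zero]
    have h1 : max (z - y) 0 ^ 2 ≤ |z - y| * |z - y| := by
      rcases le_or_gt (z - y) 0 with h' | h'
      · rw [max_eq_right h']
        simpa using mul_nonneg (abs_nonneg (z - y)) (abs_nonneg (z - y))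
      · rw [max_eq_left h'.le, sq]
        exact mul_self_le_mul_self h'.le (le_abs_self _) |>.trans
          (by rw [abs_of_pos h'])
    calc ‖max (z - y) 0 ^ 2‖ = max (z - y) 0 ^ 2 := by
          rw [Real.norm_eq_abs, abs_of_nonneg (by positivity)]
      _ ≤ |z - y| * |z - y| := h1
      _ ≤ ε * ‖z - y‖ := by
          rw [Real.norm_eq_abs]
          exact mul_le_mul_of_nonneg_right hz'.le (abs_nonneg _)
  · have he : (fun z => max (z - c) 0 ^ 2) =ᶠ[nhds y] fun z => (z - c) ^ 2 := by
      filter_upwards [Ioi_mem_nhds h] with z hz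
      simp [max_eq_left (by linarith [mem_Ioi.mp hz] : (0:ℝ) ≤ z - c)]
    have hd : HasDerivAt (fun z : ℝ => (z - c) ^ 2) (2 * (y - c)) y := by
      simpa using ((hasDerivAt_id y).sub_const c).fun_pow 2
    simpa [max_eq_left (by linarith : (0:ℝ) ≤ y - c)] using hd.congr_of_eventuallyEq he

/-- Scalar viability: if the derivative pushes back whenever `g` exceeds `c`,
then `g` stays below `c`. -/
lemma viability_le {T c : ℝ} {g G : ℝ → ℝ}
    (hg : ∀ t ∈ Icc (0:ℝ) T, HasDerivWithinAt g (G t) (Icc 0 T) t)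
    (h0 : g 0 ≤ c) (hT : 0 ≤ T)
    (hpush : ∀ t ∈ Icc (0:ℝ) T, c < g t → G t ≤ 0) :
    ∀ t ∈ Icc (0:ℝ) T, g t ≤ c := by
  set q : ℝ → ℝ := fun t => max (g t - c) 0 ^ 2 with hq_def
  have hq : ∀ t ∈ Icc (0:ℝ) T, HasDerivWithinAt q (2 * max (g t - c) 0 * G t) (Icc 0 T) t :=
    fun t ht => (hasDerivAt_sqPosPart c (g t)).comp_hasDerivWithinAt t (hg t ht)
  have hqc : ContinuousOn q (Icc 0 T) := fun t ht => (hq t ht).continuousWithinAt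
  have hderiv : ∀ t ∈ interior (Icc (0:ℝ) T), HasDerivAt q (2 * max (g t - c) 0 * G t) t := by
    intro t ht
    rw [interior_Icc] at ht
    exact (hq t (Ioo_subset_Icc_self ht)).hasDerivAt (Icc_mem_nhds ht.1 ht.2)
  have hmono : AntitoneOn q (Icc 0 T) := by
    apply antitoneOn_of_deriv_nonpos (convex_Icc 0 T) hqc
    · exact fun t ht => ((hderiv t ht).differentiableAt).differentiableWithinAt
    · intro t ht
      rw [(hderiv t ht).deriv]
      rw [interior_Icc] at ht
      rcases le_or_gt (g t) c with h | h
      · simp [max_eq_right (by linarith : g t - c ≤ 0)]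
      · have h1 : G t ≤ 0 := hpush t (Ioo_subset_Icc_self ht) h
        have h2 : (0:ℝ) ≤ 2 * max (g t - c) 0 := by positivity
        exact mul_nonpos_of_nonneg_of_nonpos h2 h1
  intro t ht
  have : q t ≤ q 0 := hmono (left_mem_Icc.mpr hT) ht ht.1
  have hq0 : q 0 = 0 := by simp [hq_def, max_eq_right (by linarith : g 0 - c ≤ 0)]
  have hqt : (max (g t - c) 0) ^ 2 ≤ 0 := by
    have : q t ≤ 0 := by linarith
    simpa [hq_def] using this
  nlinarith [le_max_left (g t - c) 0, le_max_right (g t - c) 0]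

/-- Scalar viability, lower bound version. -/
lemma viability_ge {T c : ℝ} {g G : ℝ → ℝ}
    (hg : ∀ t ∈ Icc (0:ℝ) T, HasDerivWithinAt g (G t) (Icc 0 T) t)
    (h0 : c ≤ g 0) (hT : 0 ≤ T)
    (hpush : ∀ t ∈ Icc (0:ℝ) T, g t < c → 0 ≤ G t) :
    ∀ t ∈ Icc (0:ℝ) T, c ≤ g t := by
  have key := viability_le (g := fun t => -g t) (G := fun t => -G t) (c := -c)
    (fun t ht => (hg t ht).neg) (by simpa using h0) hT
    (fun t ht h => by
      have h' : -c < -g t := h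
      simpa using hpush t ht (by linarith))
  intro t ht
  have h2 : -g t ≤ -c := key t ht
  linarith

/-- Clamp a real number to `[a, b]`. -/
def clamp1 (a b u : ℝ) : ℝ := max a (min b u)

lemma clamp1_lipschitz (a b u v : ℝ) : |clamp1 a b u - clamp1 a b v| ≤ |u - v| := by
  unfold clamp1
  calc |max a (min b u) - max a (min b v)| ≤ max |a - a| |min b u - min b v| :=
        abs_max_sub_max_le_max a (min b u) a (min b v)
    _ ≤ |min b u - min b v| := by simp
    _ ≤ max |b - b| |u - v| := abs_min_sub_min_le_max b u b v
    _ ≤ |u - v| := by simp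

lemma clamp1_mem {a b : ℝ} (hab : a ≤ b) (u : ℝ) : clamp1 a b u ∈ Icc a b := by
  unfold clamp1
  constructor
  · exact le_max_left _ _
  · exact max_le hab (min_le_left _ _)

lemma clamp1_eq_self {a b u : ℝ} (h : u ∈ Icc a b) : clamp1 a b u = u := by
  unfold clamp1
  rw [min_eq_right h.2, max_eq_right h.1]

lemma clamp1_abs_le {R u : ℝ} (hR : 0 ≤ R) : |clamp1 (-R) R u| ≤ |u| := by
  unfold clamp1
  rcases le_total u (-R) with h | h
  · rw [min_eq_right (by linarith : u ≤ R), max_eq_left h]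
    rw [abs_neg, abs_of_nonneg hR]
    calc R ≤ -u := by linarith
      _ ≤ |u| := neg_le_abs u
  · rcases le_total R u with h2 | h2
    · rw [min_eq_left h2, max_eq_right (by linarith : -R ≤ R)]
      rw [abs_of_nonneg hR]
      exact le_trans h2 (le_abs_self u)
    · rw [min_eq_right h2, max_eq_right h]

/-- Clamp the HH state: gates to `[0,1]`, voltage to `[-R,R]`. -/
def hhClamp (R : ℝ) (x : Fin 4 → ℝ) : Fin 4 → ℝ :=
  fun i => if i = 3 then clamp1 (-R) R (x i) else clamp1 0 1 (x i)

lemma hhClamp_lipschitz (R : ℝ) : LipschitzWith 1 (hhClamp R) := by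
  apply LipschitzWith.of_dist_le_mul
  intro x y
  rw [NNReal.coe_one, one_mul, dist_pi_le_iff dist_nonneg]
  intro i
  have h := dist_le_pi_dist x y i
  unfold hhClamp
  split_ifs with h3
  · calc dist (clamp1 (-R) R (x i)) (clamp1 (-R) R (y i)) ≤ |x i - y i| := by
          rw [Real.dist_eq]; exact clamp1_lipschitz _ _ _ _
      _ ≤ dist x y := by rw [← Real.dist_eq]; exact h
  · calc dist (clamp1 0 1 (x i)) (clamp1 0 1 (y i)) ≤ |x i - y i| := by
          rw [Real.dist_eq]; exact clamp1_lipschitz _ _ _ _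
      _ ≤ dist x y := by rw [← Real.dist_eq]; exact h

lemma hhClamp_eq_self {R : ℝ} {x : Fin 4 → ℝ}
    (hg : ∀ i : Fin 3, x i.castSucc ∈ Icc (0:ℝ) 1) (hV : x 3 ∈ Icc (-R) R) :
    hhClamp R x = x := by
  funext i
  unfold hhClamp
  fin_cases i
  · exact clamp1_eq_self (hg 0)
  · exact clamp1_eq_self (hg 1)
  · exact clamp1_eq_self (hg 2)
  · simp only [if_pos rfl]
    exact clamp1_eq_self hV

lemma hhClamp_gates_mem (R : ℝ) (x : Fin 4 → ℝ) (i : Fin 4) (hi : i ≠ 3) :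
    hhClamp R x i ∈ Icc (0:ℝ) 1 := by
  unfold hhClamp
  rw [if_neg hi]
  exact clamp1_mem zero_le_one _

lemma hhClamp_V_mem {R : ℝ} (hR : 0 ≤ R) (x : Fin 4 → ℝ) :
    hhClamp R x 3 ∈ Icc (-R) R := by
  unfold hhClamp
  rw [if_pos rfl]
  exact clamp1_mem (by linarith) _

lemma hhClamp_V_abs_le {R : ℝ} (hR : 0 ≤ R) (x : Fin 4 → ℝ) :
    |hhClamp R x 3| ≤ |x 3| := by
  unfold hhClamp
  rw [if_pos rfl]
  exact clamp1_abs_le hR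

lemma hhClamp_norm_le {R : ℝ} (hR : 0 ≤ R) (x : Fin 4 → ℝ) :
    ‖hhClamp R x‖ ≤ max 1 R := by
  rw [pi_norm_le_iff_of_nonneg (le_max_of_le_left zero_le_one)]
  intro i
  rcases eq_or_ne i 3 with rfl | hi
  · have := hhClamp_V_mem hR x
    rw [Real.norm_eq_abs, abs_le]
    constructor
    · linarith [this.1, le_max_right (1:ℝ) R]
    · linarith [this.2, le_max_right (1:ℝ) R]
  · have := hhClamp_gates_mem R x i hi
    rw [Real.norm_eq_abs, abs_le]
    constructor
    · linarith [this.1, le_max_left (1:ℝ) R]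
    · linarith [this.2, le_max_left (1:ℝ) R]
section componentLemmas
variable (C gNa gK gL I ENa EK EL : ℝ) (x : Fin 4 → ℝ)

lemma hhField_app0 : hhField C gNa gK gL I ENa EK EL x 0
    = alphaM (x 3) * (1 - x 0) - betaM (x 3) * x 0 := rfl
lemma hhField_app1 : hhField C gNa gK gL I ENa EK EL x 1
    = alphaH (x 3) * (1 - x 1) - betaH (x 3) * x 1 := rfl
lemma hhField_app2 : hhField C gNa gK gL I ENa EK EL x 2
    = alphaN (x 3) * (1 - x 2) - betaN (x 3) * x 2 := rfl
lemma hhField_app3 : hhField C gNa gK gL I ENa EK EL x 3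
    = C⁻¹ * (I - gNa * (x 0) ^ 3 * x 1 * (x 3 - ENa)
        - gK * (x 2) ^ 4 * (x 3 - EK) - gL * (x 3 - EL)) := rfl

end componentLemmas

/-- Bound on the voltage component of the field when the gates lie in `[0,1]`. -/
lemma hhField_V_bound {C gNa gK gL : ℝ} (hC : 0 < C) (hgNa : 0 < gNa) (hgK : 0 < gK)
    (hgL : 0 < gL) (I ENa EK EL : ℝ) {x : Fin 4 → ℝ}
    (h0 : x 0 ∈ Icc (0:ℝ) 1) (h1 : x 1 ∈ Icc (0:ℝ) 1) (h2 : x 2 ∈ Icc (0:ℝ) 1) :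
    |hhField C gNa gK gL I ENa EK EL x 3|
      ≤ C⁻¹ * (gNa + gK + gL) * |x 3|
        + C⁻¹ * (|I| + gNa * |ENa| + gK * |EK| + gL * |EL|) := by
  have e0 : |x 0| ≤ 1 := abs_le.mpr ⟨by linarith [h0.1], h0.2⟩
  have e1 : |x 1| ≤ 1 := abs_le.mpr ⟨by linarith [h1.1], h1.2⟩
  have e2 : |x 2| ≤ 1 := abs_le.mpr ⟨by linarith [h2.1], h2.2⟩
  have ha : |gNa * x 0 ^ 3 * x 1 * (x 3 - ENa)| ≤ gNa * (|x 3| + |ENa|) := by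
    rw [abs_mul, abs_mul, abs_mul, abs_of_pos hgNa, abs_pow]
    have p0 : |x 0| ^ 3 * |x 1| ≤ 1 := by
      apply mul_le_one₀ _ (abs_nonneg _) e1
      exact pow_le_one₀ (abs_nonneg _) e0
    calc gNa * |x 0| ^ 3 * |x 1| * |x 3 - ENa|
        = gNa * (|x 0| ^ 3 * |x 1| * |x 3 - ENa|) := by ring
      _ ≤ gNa * (1 * (|x 3| + |ENa|)) := by
          apply mul_le_mul_of_nonneg_left _ hgNa.le
          exact mul_le_mul p0 (abs_sub _ _) (abs_nonneg _) zero_le_one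
      _ = gNa * (|x 3| + |ENa|) := by ring
  have hb : |gK * x 2 ^ 4 * (x 3 - EK)| ≤ gK * (|x 3| + |EK|) := by
    rw [abs_mul, abs_mul, abs_of_pos hgK, abs_pow]
    have p2 : |x 2| ^ 4 ≤ 1 := pow_le_one₀ (abs_nonneg _) e2
    calc gK * |x 2| ^ 4 * |x 3 - EK|
        = gK * (|x 2| ^ 4 * |x 3 - EK|) := by ring
      _ ≤ gK * (1 * (|x 3| + |EK|)) := by
          apply mul_le_mul_of_nonneg_left _ hgK.le
          exact mul_le_mul p2 (abs_sub _ _) (abs_nonneg _) zero_le_one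
      _ = gK * (|x 3| + |EK|) := by ring
  have hc : |gL * (x 3 - EL)| ≤ gL * (|x 3| + |EL|) := by
    rw [abs_mul, abs_of_pos hgL]
    exact mul_le_mul_of_nonneg_left (abs_sub _ _) hgL.le
  have key : |I - gNa * x 0 ^ 3 * x 1 * (x 3 - ENa) - gK * x 2 ^ 4 * (x 3 - EK)
      - gL * (x 3 - EL)|
      ≤ (gNa + gK + gL) * |x 3| + (|I| + gNa * |ENa| + gK * |EK| + gL * |EL|) := by
    calc |I - gNa * x 0 ^ 3 * x 1 * (x 3 - ENa) - gK * x 2 ^ 4 * (x 3 - EK) - gL * (x 3 - EL)|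
        ≤ |I - gNa * x 0 ^ 3 * x 1 * (x 3 - ENa) - gK * x 2 ^ 4 * (x 3 - EK)|
            + |gL * (x 3 - EL)| := abs_sub _ _
      _ ≤ |I - gNa * x 0 ^ 3 * x 1 * (x 3 - ENa)| + |gK * x 2 ^ 4 * (x 3 - EK)|
            + |gL * (x 3 - EL)| := by gcongr ?_ + _; exact abs_sub _ _
      _ ≤ |I| + |gNa * x 0 ^ 3 * x 1 * (x 3 - ENa)| + |gK * x 2 ^ 4 * (x 3 - EK)|
            + |gL * (x 3 - EL)| := by gcongr ?_ + _ + _; exact abs_sub _ _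
      _ ≤ (gNa + gK + gL) * |x 3| + (|I| + gNa * |ENa| + gK * |EK| + gL * |EL|) := by
          nlinarith [ha, hb, hc]
  rw [hhField_app3, abs_mul, abs_of_nonneg (inv_pos.mpr hC).le]
  calc C⁻¹ * |I - gNa * x 0 ^ 3 * x 1 * (x 3 - ENa) - gK * x 2 ^ 4 * (x 3 - EK) - gL * (x 3 - EL)|
      ≤ C⁻¹ * ((gNa + gK + gL) * |x 3| + (|I| + gNa * |ENa| + gK * |EK| + gL * |EL|)) :=
        mul_le_mul_of_nonneg_left key (inv_pos.mpr hC).le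
    _ = C⁻¹ * (gNa + gK + gL) * |x 3| + C⁻¹ * (|I| + gNa * |ENa| + gK * |EK| + gL * |EL|) := by
        ring

lemma clamp1_of_one_le {u : ℝ} (h : 1 ≤ u) : clamp1 0 1 u = 1 := by
  unfold clamp1; rw [min_eq_left h]; simp

lemma clamp1_of_le_zero {u : ℝ} (h : u ≤ 0) : clamp1 0 1 u = 0 := by
  unfold clamp1; rw [min_eq_right (by linarith)]; simp [h]

lemma hhClamp_app_gate {R : ℝ} (x : Fin 4 → ℝ) {i : Fin 4} (hi : i ≠ 3) :
    hhClamp R x i = clamp1 0 1 (x i) := by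
  unfold hhClamp; rw [if_neg hi]

lemma hhClamp_app_V {R : ℝ} (x : Fin 4 → ℝ) : hhClamp R x 3 = clamp1 (-R) R (x 3) := by
  unfold hhClamp; rw [if_pos rfl]

/-- Coordinate projection of a vector-valued derivative. -/
lemma HasDerivWithinAt.proj {f : ℝ → Fin 4 → ℝ} {v : Fin 4 → ℝ} {s : Set ℝ} {t : ℝ}
    (i : Fin 4) (hf : HasDerivWithinAt f v s t) :
    HasDerivWithinAt (fun u => f u i) (v i) s t := by
  have h := (ContinuousLinearMap.proj (R := ℝ) (φ := fun _ : Fin 4 => ℝ)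
    i).hasFDerivAt.comp_hasDerivWithinAt t hf
  exact h

/-- Convert a derivative within `Icc 0 T` to a derivative within `Ici t`. -/
lemma hasDerivWithinAt_Ici_of_Icc {E : Type*} [NormedAddCommGroup E] [NormedSpace ℝ E]
    {f : ℝ → E} {v : E} {t T : ℝ} (ht : t ∈ Ico (0:ℝ) T)
    (hf : HasDerivWithinAt f v (Icc 0 T) t) : HasDerivWithinAt f v (Ici t) t := by
  apply hf.mono_of_mem_nhdsWithin
  rw [mem_nhdsWithin]
  exact ⟨Iio T, isOpen_Iio, ht.2, fun y hy => ⟨le_trans ht.1 hy.2, le_of_lt hy.1⟩⟩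

lemma gronwallBound_mono' {δ K ε : ℝ} (hδ : 0 ≤ δ) (hK : 0 < K) (hε : 0 ≤ ε) {s u : ℝ}
    (h : s ≤ u) : gronwallBound δ K ε s ≤ gronwallBound δ K ε u := by
  rw [gronwallBound_of_K_ne_0 hK.ne']
  simp only []
  have hee : Real.exp (K * s) ≤ Real.exp (K * u) :=
    Real.exp_le_exp.mpr (mul_le_mul_of_nonneg_left h hK.le)
  have hd : 0 ≤ ε / K := by positivity
  nlinarith

/-- A gate driven by `ṁ = α(1-m̃) - βm̃` (where `m̃` is the clamped value) stays in `[0,1]`. -/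
lemma gate_invariant {T : ℝ} (hT : 0 ≤ T) {g : ℝ → ℝ} {a b : ℝ → ℝ}
    (ha : ∀ t, 0 < a t) (hb : ∀ t, 0 < b t)
    (hg : ∀ t ∈ Icc (0:ℝ) T, HasDerivWithinAt g
        (a t * (1 - clamp1 0 1 (g t)) - b t * clamp1 0 1 (g t)) (Icc 0 T) t)
    (h0 : g 0 ∈ Icc (0:ℝ) 1) : ∀ t ∈ Icc (0:ℝ) T, g t ∈ Icc (0:ℝ) 1 := by
  have hup := viability_le hg h0.2 hT (fun t ht h => by
    rw [clamp1_of_one_le h.le]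
    have := hb t
    nlinarith)
  have hlo := viability_ge hg h0.1 hT (fun t ht h => by
    rw [clamp1_of_le_zero h.le]
    have := ha t
    nlinarith)
  exact fun t ht => ⟨hlo t ht, hup t ht⟩

/-- Existence and viability for the Hodgkin–Huxley system. -/
lemma hh_exists
    (C gNa gK gL : ℝ) (hC : 0 < C) (hgNa : 0 < gNa) (hgK : 0 < gK) (hgL : 0 < gL)
    (I ENa EK EL : ℝ) (T : ℝ) (hT : 0 < T)
    (X₀ : Fin 4 → ℝ) (hX₀ : ∀ i : Fin 3, X₀ i.castSucc ∈ Icc (0:ℝ) 1) :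
    ∃ X : ℝ → (Fin 4 → ℝ), X 0 = X₀ ∧
      (∀ t ∈ Icc (0:ℝ) T,
        HasDerivWithinAt X (hhField C gNa gK gL I ENa EK EL (X t)) (Icc 0 T) t) ∧
      (∀ t ∈ Icc (0:ℝ) T, ∀ i : Fin 3, X t i.castSucc ∈ Icc (0:ℝ) 1) := by
  set B := C⁻¹ * (gNa + gK + gL) with hB_def
  set A := C⁻¹ * (|I| + gNa * |ENa| + gK * |EK| + gL * |EL|) with hA_def
  have hB : 0 < B := by positivity
  have hA : 0 ≤ A := by positivity
  set R := gronwallBound |X₀ 3| B A T with hR_def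
  have hR0 : 0 ≤ R := by
    refine le_trans (abs_nonneg (X₀ 3)) ?_
    have := gronwallBound_mono' (abs_nonneg (X₀ 3)) hB hA hT.le
    simpa [gronwallBound_x0] using this
  set ρ := max 1 R with hρ_def
  have hρ : 0 < ρ := lt_of_lt_of_le one_pos (le_max_left _ _)
  obtain ⟨L, hL⟩ := contDiff_lipschitzOnWith (contDiff_hhField C gNa gK gL I ENa EK EL)
    (convex_closedBall (0 : Fin 4 → ℝ) ρ) (isCompact_closedBall _ _)
  have hmem : ∀ x : Fin 4 → ℝ, hhClamp R x ∈ Metric.closedBall (0 : Fin 4 → ℝ) ρ := fun x =>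
    mem_closedBall_zero_iff.mpr (hhClamp_norm_le hR0 x)
  have hlipv : LipschitzWith L (fun x => hhField C gNa gK gL I ENa EK EL (hhClamp R x)) := by
    apply LipschitzWith.of_dist_le_mul
    intro x y
    calc dist (hhField C gNa gK gL I ENa EK EL (hhClamp R x)) (hhField C gNa gK gL I ENa EK EL (hhClamp R y)) ≤ L * dist (hhClamp R x) (hhClamp R y) :=
        (lipschitzOnWith_iff_dist_le_mul.mp hL) _ (hmem x) _ (hmem y)
      _ ≤ L * dist x y := by
          apply mul_le_mul_of_nonneg_left _ L.coe_nonneg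
          simpa using (hhClamp_lipschitz R).dist_le_mul x y
  obtain ⟨Cb, hCb⟩ := (isCompact_closedBall (0 : Fin 4 → ℝ) ρ).exists_bound_of_continuousOn
    ((contDiff_hhField C gNa gK gL I ENa EK EL).continuous.continuousOn)
  have hCb0 : 0 ≤ Cb :=
    le_trans (norm_nonneg _) (hCb 0 (Metric.mem_closedBall_self hρ.le))
  have hpl : IsPicardLindelof (fun _ x => hhField C gNa gK gL I ENa EK EL (hhClamp R x))
      (tmin := 0) (tmax := T) ⟨0, left_mem_Icc.mpr hT.le⟩ X₀ ⟨Cb * T, by positivity⟩ 0 ⟨Cb, hCb0⟩ L :=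
    { lipschitzOnWith := fun t _ => hlipv.lipschitzOnWith
      continuousOn := fun x _ => continuousOn_const
      norm_le := fun t _ x _ => hCb _ (hmem x)
      mul_max_le := by simp [max_eq_left hT.le]; exact le_rfl }
  obtain ⟨f, hf0, hfd⟩ := hpl.exists_eq_forall_mem_Icc_hasDerivWithinAt₀
  replace hf0 : f 0 = X₀ := hf0
  -- gate invariance
  have hg0 : ∀ t ∈ Icc (0:ℝ) T, f t 0 ∈ Icc (0:ℝ) 1 := by
    refine gate_invariant (a := fun t => alphaM (hhClamp R (f t) 3))
      (b := fun t => betaM (hhClamp R (f t) 3)) hT.le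
      (fun t => alphaM_pos _) (fun t => betaM_pos _) ?_ ?_
    · intro t ht
      have h := (hfd t ht).proj 0
      rw [hhField_app0, hhClamp_app_gate (R := R) (f t) (i := 0) (by decide)] at h
      exact h
    · show f 0 0 ∈ Icc (0:ℝ) 1
      rw [hf0]; exact hX₀ 0
  have hg1 : ∀ t ∈ Icc (0:ℝ) T, f t 1 ∈ Icc (0:ℝ) 1 := by
    refine gate_invariant (a := fun t => alphaH (hhClamp R (f t) 3))
      (b := fun t => betaH (hhClamp R (f t) 3)) hT.le
      (fun t => alphaH_pos _) (fun t => betaH_pos _) ?_ ?_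
    · intro t ht
      have h := (hfd t ht).proj 1
      rw [hhField_app1, hhClamp_app_gate (R := R) (f t) (i := 1) (by decide)] at h
      exact h
    · show f 0 1 ∈ Icc (0:ℝ) 1
      rw [hf0]; exact hX₀ 1
  have hg2 : ∀ t ∈ Icc (0:ℝ) T, f t 2 ∈ Icc (0:ℝ) 1 := by
    refine gate_invariant (a := fun t => alphaN (hhClamp R (f t) 3))
      (b := fun t => betaN (hhClamp R (f t) 3)) hT.le
      (fun t => alphaN_pos _) (fun t => betaN_pos _) ?_ ?_
    · intro t ht
      have h := (hfd t ht).proj 2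
      rw [hhField_app2, hhClamp_app_gate (R := R) (f t) (i := 2) (by decide)] at h
      exact h
    · show f 0 2 ∈ Icc (0:ℝ) 1
      rw [hf0]; exact hX₀ 2
  -- voltage bound via Grönwall
  have hVd : ∀ t ∈ Icc (0:ℝ) T,
      HasDerivWithinAt (fun u => f u 3) (hhField C gNa gK gL I ENa EK EL (hhClamp R (f t)) 3) (Icc 0 T) t :=
    fun t ht => (hfd t ht).proj 3
  have hVb : ∀ t ∈ Ico (0:ℝ) T, ‖hhField C gNa gK gL I ENa EK EL (hhClamp R (f t)) 3‖ ≤ B * ‖f t 3‖ + A := by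
    intro t ht
    rw [Real.norm_eq_abs, Real.norm_eq_abs]
    have h := hhField_V_bound hC hgNa hgK hgL I ENa EK EL
      (hhClamp_gates_mem R (f t) 0 (by decide))
      (hhClamp_gates_mem R (f t) 1 (by decide))
      (hhClamp_gates_mem R (f t) 2 (by decide))
    refine le_trans h ?_
    have h2 := hhClamp_V_abs_le hR0 (f t)
    have hBnn : 0 ≤ B := hB.le
    rw [← hB_def, ← hA_def]
    nlinarith
  have hVle : ∀ t ∈ Icc (0:ℝ) T, ‖f t 3‖ ≤ R := by
    intro t ht
    have h := norm_le_gronwallBound_of_norm_deriv_right_le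
      (f := fun u => f u 3) (f' := fun u => hhField C gNa gK gL I ENa EK EL (hhClamp R (f u)) 3)
      (fun u hu => (hVd u hu).continuousWithinAt)
      (fun u hu => hasDerivWithinAt_Ici_of_Icc hu (hVd u (Ico_subset_Icc_self hu)))
      (by show ‖f 0 3‖ ≤ |X₀ 3|; rw [hf0, Real.norm_eq_abs])
      hVb t ht
    refine le_trans h ?_
    rw [sub_zero, hR_def]
    exact gronwallBound_mono' (abs_nonneg _) hB hA ht.2
  have hclamp : ∀ t ∈ Icc (0:ℝ) T, hhClamp R (f t) = f t := by
    intro t ht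
    apply hhClamp_eq_self
    · intro i
      fin_cases i
      · exact hg0 t ht
      · exact hg1 t ht
      · exact hg2 t ht
    · have := hVle t ht
      rw [Real.norm_eq_abs] at this
      exact abs_le.mp this
  refine ⟨f, hf0, fun t ht => ?_, fun t ht i => ?_⟩
  · have h := hfd t ht
    rwa [hclamp t ht] at h
  · fin_cases i
    · exact hg0 t ht
    · exact hg1 t ht
    · exact hg2 t ht

/-- Uniqueness for the Hodgkin–Huxley system. -/
lemma hh_unique (C gNa gK gL I ENa EK EL : ℝ) (T : ℝ) (hT : 0 < T)
    (X Y : ℝ → Fin 4 → ℝ) (h0 : X 0 = Y 0)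
    (hXd : ∀ t ∈ Icc (0:ℝ) T,
      HasDerivWithinAt X (hhField C gNa gK gL I ENa EK EL (X t)) (Icc 0 T) t)
    (hYd : ∀ t ∈ Icc (0:ℝ) T,
      HasDerivWithinAt Y (hhField C gNa gK gL I ENa EK EL (Y t)) (Icc 0 T) t) :
    EqOn X Y (Icc 0 T) := by
  have hXc : ContinuousOn X (Icc 0 T) := fun t ht => (hXd t ht).continuousWithinAt
  have hYc : ContinuousOn Y (Icc 0 T) := fun t ht => (hYd t ht).continuousWithinAt
  have hcomp : IsCompact (X '' Icc 0 T ∪ Y '' Icc 0 T) :=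
    (isCompact_Icc.image_of_continuousOn hXc).union (isCompact_Icc.image_of_continuousOn hYc)
  obtain ⟨ρ, hρ⟩ := hcomp.isBounded.subset_closedBall 0
  obtain ⟨K, hK⟩ := contDiff_lipschitzOnWith (contDiff_hhField C gNa gK gL I ENa EK EL)
    (convex_closedBall (0 : Fin 4 → ℝ) ρ) (isCompact_closedBall _ _)
  exact ODE_solution_unique_of_mem_Icc_right
    (v := fun _ => hhField C gNa gK gL I ENa EK EL)
    (s := fun _ => Metric.closedBall (0 : Fin 4 → ℝ) ρ)
    (fun _ _ => hK) hXc
    (fun t ht => hasDerivWithinAt_Ici_of_Icc ht (hXd t (Ico_subset_Icc_self ht)))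
    (fun t ht => hρ (mem_union_left _ (mem_image_of_mem X (Ico_subset_Icc_self ht))))
    hYc
    (fun t ht => hasDerivWithinAt_Ici_of_Icc ht (hYd t (Ico_subset_Icc_self ht)))
    (fun t ht => hρ (mem_union_right _ (mem_image_of_mem Y (Ico_subset_Icc_self ht))))
    h0

/-- The deterministic Hodgkin–Huxley system: for every horizon `T > 0` and every
initial condition in `K = [0,1]³ × ℝ`, the ODE `Ẋ = b(X)` has a unique solution
on `[0,T]`, and this solution stays in `K` (the gating components remain
proportions in `[0,1]`). -/
theorem hh_ode_existence_uniqueness_viability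
    (C gNa gK gL : ℝ) (hC : 0 < C) (hgNa : 0 < gNa) (hgK : 0 < gK) (hgL : 0 < gL)
    (I ENa EK EL : ℝ) (T : ℝ) (hT : 0 < T)
    (X₀ : Fin 4 → ℝ) (hX₀ : ∀ i : Fin 3, X₀ i.castSucc ∈ Set.Icc (0 : ℝ) 1) :
    (∃ X : ℝ → (Fin 4 → ℝ), X 0 = X₀ ∧
      (∀ t ∈ Set.Icc 0 T,
        HasDerivWithinAt X (hhField C gNa gK gL I ENa EK EL (X t)) (Set.Icc 0 T) t) ∧
      (∀ t ∈ Set.Icc 0 T, ∀ i : Fin 3, X t i.castSucc ∈ Set.Icc (0 : ℝ) 1)) ∧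
    (∀ X Y : ℝ → (Fin 4 → ℝ),
      (X 0 = X₀ ∧ ∀ t ∈ Set.Icc 0 T,
        HasDerivWithinAt X (hhField C gNa gK gL I ENa EK EL (X t)) (Set.Icc 0 T) t) →
      (Y 0 = X₀ ∧ ∀ t ∈ Set.Icc 0 T,
        HasDerivWithinAt Y (hhField C gNa gK gL I ENa EK EL (Y t)) (Set.Icc 0 T) t) →
      Set.EqOn X Y (Set.Icc 0 T)) := by
  refine ⟨?_, ?_⟩
  · exact hh_exists C gNa gK gL hC hgNa hgK hgL I ENa EK EL T hT X₀ hX₀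
  · rintro X Y ⟨hX0, hXd⟩ ⟨hY0, hYd⟩
    exact hh_unique C gNa gK gL I ENa EK EL T hT X Y (by rw [hX0, hY0]) hXd hYd
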